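/- Let k ≥ 1, M ∈ ℕ, d ≥ 1, and let S_1, …, S_k be sets of vectors in {−M, …, M}^d ⊆ ℤ^d, with associated set cover instance J. If there exist x_1 ∈ S_1, …, x_k ∈ S_k with x_1 + ⋯ + x_k = 0, then {x_1, …, x_k} covers the universe of J. -/
import Mathlib


/-- `D = {(d_1, …, d_k) ∈ {−M, …, M}^k : d_1 + ⋯ + d_k = 0}`. -/
def VecD (k M : ℕ) : Type :=
  {a : Fin k → ℤ // (∀ i, |a i| ≤ (M : ℤ)) ∧ ∑ i, a i = 0}

/-- The adjacency relation of the set cover instance `J` associated with sets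
`S_1, …, S_k` of vectors in `{−M, …, M}^d ⊆ ℤ^d`: the left side is the disjoint union
`Σ i, {x // x ∈ Sfam i}`, the universe is `[d] × ([k]^D)`, and `x ∈ S_i` is adjacent to
`(j, u)` iff there exists `a ∈ D` with `u a = i` and `x j = a i`. -/
def vecAdj {k M d : ℕ} (Sfam : Fin k → Finset (Fin d → ℤ))
    (s : Σ i : Fin k, {x : Fin d → ℤ // x ∈ Sfam i})
    (u : Fin d × (VecD k M → Fin k)) : Prop :=
  ∃ a : VecD k M, u.2 a = s.1 ∧ s.2.val u.1 = a.val s.1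

/-- Let `k ≥ 1`, `M ∈ ℕ`, `d ≥ 1`, and let `S_1, …, S_k` be sets of vectors
in `{−M, …, M}^d ⊆ ℤ^d`, with associated set cover instance `J`.  If there exist
`x_1 ∈ S_1, …, x_k ∈ S_k` with `x_1 + ⋯ + x_k = 0`, then `{x_1, …, x_k}` covers the
universe of `J`. -/
theorem vecsum_completeness (k M d : ℕ) (hk : 1 ≤ k) (hd : 1 ≤ d)
    (Sfam : Fin k → Finset (Fin d → ℤ))
    (hbound : ∀ i : Fin k, ∀ x ∈ Sfam i, ∀ j : Fin d, |x j| ≤ (M : ℤ))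
    (x : Fin k → (Fin d → ℤ)) (hx : ∀ i, x i ∈ Sfam i)
    (hsum : ∑ i, x i = 0) :
    ∀ u : Fin d × (VecD k M → Fin k), ∃ i : Fin k,
      vecAdj Sfam ⟨i, ⟨x i, hx i⟩⟩ u := by
  intro u
  have hsum' : ∑ i, x i u.1 = 0 := by
    have := congrFun hsum u.1
    simpa using this
  refine ⟨u.2 ⟨fun i => x i u.1, fun i => hbound i (x i) (hx i) u.1, hsum'⟩,
    ⟨fun i => x i u.1, fun i => hbound i (x i) (hx i) u.1, hsum'⟩, rfl, rfl⟩
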